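/- Let G be an oriented graph on n vertices satisfying the Ore-degree condition deg⁺(x) + deg⁻(y) ≥ (3n-3)/4 whenever xy ∉ E(G). Then for every pair of distinct vertices (u,v) with uv ∉ E(G), there exists an integer k with 1 ≤ k ≤ 3 such that G contains at least 2^{-24} n^k directed paths from u to v of length exactly k+1 (i.e., with exactly k internal vertices). -/

import Mathlib

set_option linter.unusedSectionVars false
set_option maxHeartbeats 4000000

open Finset

/-- Out-degree of a vertex in a digraph given by an edge relation. -/
def degPlus {V : Type} [Fintype V] (E : V → V → Prop) [DecidableRel E] (x : V) : ℕ :=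
  (Finset.univ.filter fun y => E x y).card

/-- In-degree of a vertex in a digraph given by an edge relation. -/
def degMinus {V : Type} [Fintype V] (E : V → V → Prop) [DecidableRel E] (x : V) : ℕ :=
  (Finset.univ.filter fun y => E y x).card

/-- An oriented graph: no loops and no 2-cycles. -/
def Oriented {V : Type} (E : V → V → Prop) : Prop :=
  (∀ x, ¬ E x x) ∧ ∀ x y, E x y → ¬ E y x

/-- Number of directed `(u,v)`-paths of length `k+1`, i.e. with exactly `k` internal
vertices: sequences `u = w 0, w 1, …, w (k+1) = v` of distinct vertices with consecutive
edges. -/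
def pathCount {V : Type} [Fintype V] [DecidableEq V] (E : V → V → Prop) [DecidableRel E]
    (u v : V) (k : ℕ) : ℕ :=
  (Finset.univ.filter fun w : Fin (k + 2) → V =>
    w 0 = u ∧ w (Fin.last (k + 1)) = v ∧ Function.Injective w ∧
      ∀ i : Fin (k + 1), E (w i.castSucc) (w i.succ)).card

section Aux

variable {V : Type} [Fintype V] [DecidableEq V] (E : V → V → Prop) [DecidableRel E]

omit [Fintype V] in
lemma aux_card_pair (X Y : Finset V) (P : V → V → Prop) [DecidableRel P] :
    ((X ×ˢ Y).filter fun p => P p.1 p.2).card = ∑ x ∈ X, (Y.filter (P x)).card := by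
  rw [Finset.card_filter, Finset.sum_product]
  congr 1; ext x
  rw [Finset.card_filter]

omit [Fintype V] in
lemma aux_card_pair' (X Y : Finset V) (P : V → V → Prop) [DecidableRel P] :
    ((X ×ˢ Y).filter fun p => P p.1 p.2).card = ∑ y ∈ Y, (X.filter fun x => P x y).card := by
  rw [Finset.card_filter, Finset.sum_product_right]
  congr 1; ext y
  rw [Finset.card_filter]

lemma aux_card_trip (X Y : Finset V) (R : V → V → V → Prop) [∀ a b c, Decidable (R a b c)] :
    ((X ×ˢ Y ×ˢ (univ : Finset V)).filter fun p => R p.1 p.2.1 p.2.2).card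
      = ∑ p ∈ X ×ˢ Y, ((univ : Finset V).filter fun c => R p.1 p.2 c).card := by
  rw [Finset.card_filter, Finset.sum_product, Finset.sum_product]
  congr 1; ext x
  rw [Finset.sum_product]
  congr 1; ext y
  rw [Finset.card_filter]

omit [Fintype V] in
lemma aux_orient_bound (hor : Oriented E) (X : Finset V) :
    2 * ((X ×ˢ X).filter fun p => E p.1 p.2).card + X.card ≤ X.card * X.card := by
  set F := (X ×ˢ X).filter fun p => E p.1 p.2 with hF
  have hsub : F ⊆ X.offDiag := by
    rintro ⟨x, y⟩ hp
    simp only [hF, mem_filter, mem_product] at hp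
    refine Finset.mem_offDiag.2 ⟨hp.1.1, hp.1.2, ?_⟩
    intro h; simp only at h; subst h; exact hor.1 _ hp.2
  have hsub2 : F.image Prod.swap ⊆ X.offDiag := by
    intro p hp
    obtain ⟨⟨x, y⟩, hq, rfl⟩ := Finset.mem_image.1 hp
    simp only [hF, mem_filter, mem_product] at hq
    refine Finset.mem_offDiag.2 ⟨hq.1.2, hq.1.1, ?_⟩
    intro h; simp only [Prod.swap_prod_mk] at h; subst h; exact hor.1 _ hq.2
  have hdisj : Disjoint F (F.image Prod.swap) := by
    rw [Finset.disjoint_left]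
    rintro ⟨x, y⟩ hp hp2
    obtain ⟨⟨x', y'⟩, hq, hqe⟩ := Finset.mem_image.1 hp2
    simp only [hF, mem_filter, mem_product] at hp hq
    simp only [Prod.swap_prod_mk, Prod.mk.injEq] at hqe
    exact hor.2 _ _ hp.2 (by rw [← hqe.1, ← hqe.2]; exact hq.2)
  have hcard : F.card + F.card ≤ X.offDiag.card := by
    have := Finset.card_le_card (Finset.union_subset hsub hsub2)
    rwa [Finset.card_union_of_disjoint hdisj,
      Finset.card_image_of_injective _ Prod.swap_injective] at this
  rw [Finset.offDiag_card] at hcard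
  rcases Nat.eq_zero_or_pos X.card with h | h
  · rw [h] at hcard ⊢; omega
  · have h2 : X.card ≤ X.card * X.card := Nat.le_mul_of_pos_left _ h
    omega

omit [Fintype V] in
lemma aux_filter_inter (p : V → Prop) [DecidablePred p] (s t : Finset V) (hst : s ⊆ t) :
    t.filter p ∩ s = s.filter p := by
  ext z
  simp only [mem_inter, mem_filter]
  constructor
  · rintro ⟨⟨_, h⟩, hz⟩; exact ⟨hz, h⟩
  · rintro ⟨hz, h⟩; exact ⟨⟨hst hz, h⟩, hz⟩

omit [Fintype V] [DecidableEq V] in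
lemma aux_inj4 {a b c d : V} (h1 : a ≠ b) (h2 : a ≠ c) (h3 : a ≠ d) (h4 : b ≠ c) (h5 : b ≠ d)
    (h6 : c ≠ d) : Function.Injective ![a, b, c, d] := by
  intro i j hij
  fin_cases i <;> fin_cases j <;> simp_all

omit [Fintype V] [DecidableEq V] in
lemma aux_inj3 {a b c : V} (h1 : a ≠ b) (h2 : a ≠ c) (h3 : b ≠ c) :
    Function.Injective ![a, b, c] := by
  intro i j hij
  fin_cases i <;> fin_cases j <;> simp_all

omit [Fintype V] [DecidableEq V] in
lemma aux_inj5 {a b c d e : V} (h1 : a ≠ b) (h2 : a ≠ c) (h3 : a ≠ d) (h4 : a ≠ e) (h5 : b ≠ c)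
    (h6 : b ≠ d) (h7 : b ≠ e) (h8 : c ≠ d) (h9 : c ≠ e) (h10 : d ≠ e) :
    Function.Injective ![a, b, c, d, e] := by
  intro i j hij
  fin_cases i <;> fin_cases j <;> simp_all

lemma aux_path1_ge (hor : Oriented E) (u v : V) (hne : ¬ E u v) :
    ((univ.filter fun z => E u z) ∩ (univ.filter fun z => E z v)).card ≤ pathCount E u v 1 := by
  apply Finset.card_le_card_of_injOn (fun c => ![u, c, v])
  · intro c hc
    simp only [Finset.mem_coe, mem_inter, mem_filter, mem_univ, true_and] at hc
    obtain ⟨h1, h2⟩ := hc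
    have hcu : u ≠ c := by rintro rfl; exact hor.1 u h1
    have hcv : c ≠ v := by rintro rfl; exact hne h1
    have huv : u ≠ v := by rintro rfl; exact hor.2 _ _ h1 h2
    simp only [Finset.mem_coe, pathCount, mem_filter, mem_univ, true_and]
    refine ⟨rfl, rfl, aux_inj3 hcu huv hcv, ?_⟩
    intro i
    fin_cases i
    · simpa using h1
    · simpa using h2
  · intro c _ c' _ h
    have := congrFun h 1
    simpa using this

lemma aux_path2_ge (hor : Oriented E) (u v : V) (huv : u ≠ v) (hne : ¬ E u v) :
    ((((univ.filter fun z => E u z) ×ˢ (univ.filter fun z => E z v)).filter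
      fun p => E p.1 p.2)).card ≤ pathCount E u v 2 := by
  apply Finset.card_le_card_of_injOn (fun p => ![u, p.1, p.2, v])
  · rintro ⟨x, y⟩ hp
    simp only [Finset.mem_coe, mem_filter, mem_product, mem_univ, true_and] at hp
    obtain ⟨⟨hx, hy⟩, hxy⟩ := hp
    have nux : u ≠ x := by rintro rfl; exact hor.1 u hx
    have nuy : u ≠ y := by rintro rfl; exact hne hy
    have nxy : x ≠ y := by rintro rfl; exact hor.1 x hxy
    have nxv : x ≠ v := by rintro rfl; exact hne hx
    have nyv : y ≠ v := by rintro rfl; exact hor.1 _ hy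
    simp only [Finset.mem_coe, pathCount, mem_filter, mem_univ, true_and]
    refine ⟨rfl, rfl, aux_inj4 nux nuy huv nxy nxv nyv, ?_⟩
    intro i
    fin_cases i
    · simpa using hx
    · simpa using hxy
    · simpa using hy
  · rintro ⟨x, y⟩ _ ⟨x', y'⟩ _ h
    have h1 := congrFun h 1
    have h2 := congrFun h 2
    simp only at h1 h2
    simp_all

lemma aux_path3_ge (hor : Oriented E) (u v : V) (huv : u ≠ v) (hne : ¬ E u v) :
    ((((univ.filter fun z => E u z) ×ˢ (univ.filter fun z => E z v) ×ˢ (univ : Finset V)).filter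
      fun p => (E p.1 p.2.2 ∧ E p.2.2 p.2.1) ∧ p.2.2 ≠ u ∧ p.2.2 ≠ v)).card
      ≤ pathCount E u v 3 := by
  apply Finset.card_le_card_of_injOn (fun p => ![u, p.1, p.2.2, p.2.1, v])
  · rintro ⟨x, y, c⟩ hp
    simp only [Finset.mem_coe, mem_filter, mem_product, mem_univ, true_and, and_true] at hp
    obtain ⟨⟨hx, hy⟩, ⟨hxc, hcy⟩, hcu, hcv⟩ := hp
    have nux : u ≠ x := by rintro rfl; exact hor.1 u hx
    have nuc : u ≠ c := fun h => hcu h.symm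
    have nuy : u ≠ y := by rintro rfl; exact hne hy
    have nxc : x ≠ c := by rintro rfl; exact hor.1 x hxc
    have nxy : x ≠ y := by rintro rfl; exact hor.2 _ _ hxc hcy
    have nxv : x ≠ v := by rintro rfl; exact hne hx
    have ncy : c ≠ y := by rintro rfl; exact hor.1 c hcy
    have ncv : c ≠ v := hcv
    have nyv : y ≠ v := by rintro rfl; exact hor.1 _ hy
    simp only [Finset.mem_coe, pathCount, mem_filter, mem_univ, true_and]
    refine ⟨rfl, rfl, aux_inj5 nux nuc nuy huv nxc nxy nxv ncy ncv nyv, ?_⟩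
    intro i
    fin_cases i
    · simpa using hx
    · simpa using hxc
    · simpa using hcy
    · simpa using hy
  · rintro ⟨x, y, c⟩ _ ⟨x', y', c'⟩ _ h
    have h1 := congrFun h 1
    have h2 := congrFun h 2
    have h3 := congrFun h 3
    simp only at h1 h2 h3
    simp_all

end Aux


lemma aux_P1term (x a1 b1 e m c0 : ℝ) (h1 : x ≥ a1 * b1 - e) (h2 : x ≤ a1 * b1)
    (he : 0 ≤ e) (hm : 0 ≤ m) (hc : 0 ≤ c0) :
    x * (m - c0) ≥ a1 * b1 * (m - c0) - e * m := by
  rcases le_or_gt c0 m with h | h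
  · nlinarith
  · nlinarith

lemma aux_small (nr m a b T : ℝ) (hm : m = (3*nr-3)/4) (hnr : 2 ≤ nr)
    (hab : a + b ≥ m) (ha2 : a ≤ nr - 2) (hb2 : b ≤ nr - 2)
    (Hu : (nr-1-a)*(m-a) ≤ nr*(nr-1)/2) (Hv : (nr-1-b)*(m-b) ≤ nr*(nr-1)/2)
    (haN : a = 0 ∨ 1 ≤ a) (hbN : b = 0 ∨ 1 ≤ b)
    (master : T ≥ a*b*(m - (nr - (a+b))) - b*(a*(a-1)/2) - a*(b*(b-1)/2))
    (hT : T ≤ 0) : False := by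
  rcases haN with ha0 | ha1
  · subst ha0
    nlinarith [Hu, hab, hb2, hnr]
  rcases hbN with hb0 | hb1
  · subst hb0
    nlinarith [Hv, hab, ha2, hnr]
  have hkey : a*b*(m - (nr - (a+b))) - b*(a*(a-1)/2) - a*(b*(b-1)/2)
      = a*b*(m - nr + (a+b)/2 + 1) := by ring
  rw [hkey] at master
  have hbr : (nr-1)/8 ≤ m - nr + (a+b)/2 + 1 := by linarith
  have h1 : (1:ℝ) ≤ a*b := by nlinarith
  have h2 : a*b*((nr-1)/8) ≤ a*b*(m - nr + (a+b)/2 + 1) :=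
    mul_le_mul_of_nonneg_left hbr (by nlinarith)
  nlinarith [h1, h2, hnr]

lemma aux_large (nr m a b i e T p3 : ℝ)
    (hm : m = (3*nr-3)/4) (hnr : 257 ≤ nr)
    (hab : a + b ≥ m) (han : a ≤ nr) (hbn : b ≤ nr)
    (hi0 : 0 ≤ i) (hia : i ≤ a) (hib : i ≤ b) (he0 : 0 ≤ e)
    (Hu : (nr-1-a)*(m-a) ≤ nr*(nr-1)/2) (Hv : (nr-1-b)*(m-b) ≤ nr*(nr-1)/2)
    (master : T ≥ (a-i)*(b-i)*(m - (nr-(a+b-i))) - e*m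
      - (b-i)*(a*(a-1)/2 + e) - (a-i)*(b*(b-1)/2 + e))
    (hie : i ≤ nr/16777216) (hee : e ≤ nr*nr/16777216)
    (hpc3 : T - nr*i - i*nr ≤ p3) : nr^3/16777216 ≤ p3 := by
  have ha0 : 0 ≤ a := le_trans hi0 hia
  have hb0 : 0 ≤ b := le_trans hi0 hib
  have ha8 : nr/8 ≤ a := by
    by_contra h
    push_neg at h
    have w1 : 0 ≤ (nr/8 - a) * (m + nr - 1 - nr/8 - a) :=
      mul_nonneg (by linarith) (by linarith)
    have w2 : 257*nr ≤ nr*nr := mul_le_mul_of_nonneg_right hnr (by linarith)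
    nlinarith [Hu, w1, w2]
  have hb8 : nr/8 ≤ b := by
    by_contra h
    push_neg at h
    have w1 : 0 ≤ (nr/8 - b) * (m + nr - 1 - nr/8 - b) :=
      mul_nonneg (by linarith) (by linarith)
    have w2 : 257*nr ≤ nr*nr := mul_le_mul_of_nonneg_right hnr (by linarith)
    nlinarith [Hv, w1, w2]
  have hA1 : nr/9 ≤ a - i := by linarith
  have hB1 : nr/9 ≤ b - i := by linarith
  have hq1 : a*(a-1) ≤ (a-i)*(a-i) + 3*nr*i := by
    nlinarith [mul_le_mul_of_nonneg_right han hi0, sq_nonneg i,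
      mul_nonneg (by linarith : (0:ℝ) ≤ nr) hi0]
  have hq2 : b*(b-1) ≤ (b-i)*(b-i) + 3*nr*i := by
    nlinarith [mul_le_mul_of_nonneg_right hbn hi0, sq_nonneg i,
      mul_nonneg (by linarith : (0:ℝ) ≤ nr) hi0]
  have hnri : 0 ≤ nr * i := mul_nonneg (by linarith) hi0
  have hq1' : (b-i)*(a*(a-1)/2) ≤ (b-i)*((a-i)*(a-i))/2 + (3/2)*nr*nr*i := by
    have e1 : a*(a-1)/2 ≤ ((a-i)*(a-i) + 3*nr*i)/2 := by linarith
    have e0 : (0:ℝ) ≤ b - i := by linarith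
    have h1 : (b-i)*(a*(a-1)/2) ≤ (b-i)*(((a-i)*(a-i) + 3*nr*i)/2) :=
      mul_le_mul_of_nonneg_left e1 e0
    have e2 : b - i ≤ nr := by linarith
    have e3 : (0:ℝ) ≤ 3*nr*i := by positivity
    have h2 : (b-i)*(3*nr*i) ≤ nr*(3*nr*i) := mul_le_mul_of_nonneg_right e2 e3
    linarith [h1, h2]
  have hq2' : (a-i)*(b*(b-1)/2) ≤ (a-i)*((b-i)*(b-i))/2 + (3/2)*nr*nr*i := by
    have e1 : b*(b-1)/2 ≤ ((b-i)*(b-i) + 3*nr*i)/2 := by linarith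
    have e0 : (0:ℝ) ≤ a - i := by linarith
    have h1 : (a-i)*(b*(b-1)/2) ≤ (a-i)*(((b-i)*(b-i) + 3*nr*i)/2) :=
      mul_le_mul_of_nonneg_left e1 e0
    have e2 : a - i ≤ nr := by linarith
    have e3 : (0:ℝ) ≤ 3*nr*i := by positivity
    have h2 : (a-i)*(3*nr*i) ≤ nr*(3*nr*i) := mul_le_mul_of_nonneg_right e2 e3
    linarith [h1, h2]
  have hme : e*m + (b-i)*e + (a-i)*e ≤ 3*nr*e := by
    have h1 : m ≤ nr := by linarith
    have w1 : e*m ≤ e*nr := mul_le_mul_of_nonneg_left h1 he0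
    have w2 : (a-i)*e ≤ nr*e := mul_le_mul_of_nonneg_right (by linarith) he0
    have w3 : (b-i)*e ≤ nr*e := mul_le_mul_of_nonneg_right (by linarith) he0
    linarith [w1, w2, w3]
  -- combine into T ≥ A1*B1*(m - nr + (a+b)/2) - 3nr²i - 3nr e
  have hcomb : T ≥ (a-i)*(b-i)*(m - nr + (a+b)/2) - 3*nr*nr*i - 3*nr*e := by
    have hkey : (a-i)*(b-i)*(m - (nr-(a+b-i))) - (b-i)*((a-i)*(a-i))/2 - (a-i)*((b-i)*(b-i))/2
        = (a-i)*(b-i)*(m - nr + (a+b)/2) := by ring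
    linarith [master, hq1', hq2', hme, hkey]
  have hbr : nr/9 ≤ m - nr + (a+b)/2 := by linarith
  have hT3 : (nr/9)*(nr/9)*(nr/9) ≤ (a-i)*(b-i)*(m - nr + (a+b)/2) := by
    have h9 : (0:ℝ) < nr/9 := by linarith
    have s1 : (nr/9)*(nr/9) ≤ (a-i)*(b-i) := mul_le_mul hA1 hB1 h9.le (by linarith)
    have s2 : 0 ≤ (a-i)*(b-i) := mul_nonneg (by linarith) (by linarith)
    calc (nr/9)*(nr/9)*(nr/9) ≤ (a-i)*(b-i)*(nr/9) :=
          mul_le_mul_of_nonneg_right s1 (le_of_lt h9)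
      _ ≤ (a-i)*(b-i)*(m - nr + (a+b)/2) := mul_le_mul_of_nonneg_left hbr s2
  have hb1 : nr*nr*i ≤ nr*nr*(nr/16777216) :=
    mul_le_mul_of_nonneg_left hie (by positivity)
  have hb2 : nr*e ≤ nr*(nr*nr/16777216) :=
    mul_le_mul_of_nonneg_left hee (by linarith)
  have hb3 : nr*i ≤ nr*(nr/16777216) :=
    mul_le_mul_of_nonneg_left hie (by linarith)
  have hfin : nr^3/16777216 + 2*nr*(nr/16777216) + 3*nr*nr*(nr/16777216) + 3*nr*(nr*nr/16777216)
      ≤ (nr/9)*(nr/9)*(nr/9) := by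
    have hnn : (0:ℝ) ≤ nr*nr := by positivity
    have c1 : 257*(nr*nr) ≤ nr*(nr*nr) := mul_le_mul_of_nonneg_right hnr hnn
    nlinarith [c1, hnn]
  linarith [hcomb, hT3, hb1, hb2, hb3, hfin, hpc3]


theorem stmt_2 {V : Type} [Fintype V] [DecidableEq V] (E : V → V → Prop) [DecidableRel E]
    (n : ℕ) (hn : Fintype.card V = n)
    (hor : Oriented E)
    (hOre : ∀ x y : V, x ≠ y → ¬ E x y →
      ((degPlus E x : ℝ) + (degMinus E y : ℝ)) ≥ (3 * n - 3) / 4)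
    (u v : V) (huv : u ≠ v) (hne : ¬ E u v) :
    ∃ k : ℕ, 1 ≤ k ∧ k ≤ 3 ∧
      (pathCount E u v k : ℝ) ≥ (2 : ℝ) ^ (-24 : ℤ) * (n : ℝ) ^ k := by
  classical
  subst hn
  set n := Fintype.card V with hn
  have hn2 : 2 ≤ n := Fintype.one_lt_card_iff_nontrivial.2 ⟨u, v, huv⟩
  set A : Finset V := univ.filter fun z => E u z with hA
  set B : Finset V := univ.filter fun z => E z v with hB
  set A' : Finset V := A \ B with hA'
  set B' : Finset V := B \ A with hB'
  set Cs : Finset V := univ \ (A ∪ B) with hCs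
  set eSet : Finset (V × V) := (A ×ˢ B).filter fun p => E p.1 p.2 with heSet
  -- real abbreviations
  set nr : ℝ := (n : ℝ) with hnr
  set m : ℝ := (3 * nr - 3) / 4 with hm
  set a : ℝ := (A.card : ℝ) with ha
  set b : ℝ := (B.card : ℝ) with hb
  set i : ℝ := ((A ∩ B).card : ℝ) with hi
  set e : ℝ := (eSet.card : ℝ) with he
  set a1 : ℝ := (A'.card : ℝ) with ha1
  set b1 : ℝ := (B'.card : ℝ) with hb1
  set c0 : ℝ := (Cs.card : ℝ) with hc0
  have hnr2 : (2 : ℝ) ≤ nr := by rw [hnr]; exact_mod_cast hn2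
  -- basic membership facts
  have huA : u ∉ A := by simp [hA, hor.1 u]
  have huB : u ∉ B := by simp [hB, hne]
  have hvA : v ∉ A := by simp [hA, hne]
  have hvB : v ∉ B := by simp [hB, hor.1 v]
  -- degree identifications
  have hdegu : (degPlus E u : ℝ) = a := by rw [ha, hA]; rfl
  have hdegv : (degMinus E v : ℝ) = b := by rw [hb, hB]; rfl
  -- Ore for (u,v)
  have hab : a + b ≥ m := by
    have := hOre u v huv hne
    rw [hdegu, hdegv] at this
    linarith
  -- cardinal identities
  have hia : i ≤ a := by
    exact_mod_cast Nat.cast_le.2 (Finset.card_le_card (Finset.inter_subset_left))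
  have hib : i ≤ b := by
    exact_mod_cast Nat.cast_le.2 (Finset.card_le_card (Finset.inter_subset_right))
  have hi0 : 0 ≤ i := by positivity
  have he0 : 0 ≤ e := by positivity
  have han : a ≤ nr := by
    exact_mod_cast Nat.cast_le.2 (Finset.card_le_univ A)
  have hbn : b ≤ nr := by
    exact_mod_cast Nat.cast_le.2 (Finset.card_le_univ B)
  have ha1e : a1 = a - i := by
    rw [ha1, ha, hi, hA']
    have := Finset.card_inter_add_card_sdiff A B
    push_cast [← this]
    ring
  have hb1e : b1 = b - i := by
    rw [hb1, hb, hi, hB']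
    have := Finset.card_inter_add_card_sdiff B A
    rw [Finset.inter_comm] at this
    push_cast [← this]
    ring
  have hc0e : c0 = nr - (a + b - i) := by
    have h1 : (A ∪ B).card + (A ∩ B).card = A.card + B.card := Finset.card_union_add_card_inter A B
    have h2 : Cs.card = n - (A ∪ B).card := by
      rw [hCs, Finset.card_sdiff_of_subset (Finset.subset_univ _), Finset.card_univ]
    have h3 : (A ∪ B).card ≤ n := by
      rw [hn, ← Finset.card_univ]; exact Finset.card_le_card (Finset.subset_univ _)
    rw [hc0, h2, ha, hb, hi, hnr]
    push_cast [Nat.cast_sub h3]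
    linarith [h1, (by exact_mod_cast congrArg (Nat.cast (R := ℝ)) h1 : ((A ∪ B).card : ℝ) + ((A ∩ B).card : ℝ) = (A.card : ℝ) + (B.card : ℝ))]
  have ha1n : a1 ≤ nr := by
    exact_mod_cast Nat.cast_le.2 (Finset.card_le_univ A')
  have hb1n : b1 ≤ nr := by
    exact_mod_cast Nat.cast_le.2 (Finset.card_le_univ B')
  -- path count lower bounds
  have hpc1 : i ≤ (pathCount E u v 1 : ℝ) := by
    rw [hi]
    exact_mod_cast aux_path1_ge E hor u v hne
  have hpc2 : e ≤ (pathCount E u v 2 : ℝ) := by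
    rw [he]
    exact_mod_cast aux_path2_ge E hor u v huv hne
  -- the triple count
  set S : Finset (V × V × V) := (A ×ˢ B ×ˢ (univ : Finset V)).filter
    fun p => E p.1 p.2.2 ∧ E p.2.2 p.2.1 with hS
  set T : ℝ := (S.card : ℝ) with hT
  have hTsum : S.card = ∑ p ∈ A ×ˢ B, ((univ : Finset V).filter fun c => E p.1 c ∧ E c p.2).card :=
    aux_card_trip A B (fun x y c => E x c ∧ E c y)
  have hpc3 : T - nr * i - i * nr ≤ (pathCount E u v 3 : ℝ) := by
    classical
    set S3 : Finset (V × V × V) := S.filter (fun p => p.2.2 ≠ u ∧ p.2.2 ≠ v) with hS3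
    have hS3path : S3.card ≤ pathCount E u v 3 := by
      have h := aux_path3_ge E hor u v huv hne
      have : S3 = ((A ×ˢ B ×ˢ (univ : Finset V)).filter
          fun p => (E p.1 p.2.2 ∧ E p.2.2 p.2.1) ∧ p.2.2 ≠ u ∧ p.2.2 ≠ v) := by
        rw [hS3, hS, Finset.filter_filter]
      rw [this]
      exact h
    set Su : Finset (V × V × V) := S.filter (fun p => p.2.2 = u) with hSu
    set Sv : Finset (V × V × V) := S.filter (fun p => p.2.2 = v) with hSv
    have hcov : S ⊆ S3 ∪ (Su ∪ Sv) := by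
      intro p hp
      simp only [hS3, hSu, hSv, Finset.mem_union, Finset.mem_filter]
      by_cases h1 : p.2.2 = u
      · exact Or.inr (Or.inl ⟨hp, h1⟩)
      by_cases h2 : p.2.2 = v
      · exact Or.inr (Or.inr ⟨hp, h2⟩)
      · exact Or.inl ⟨hp, h1, h2⟩
    have hSucard : Su.card ≤ A.card * (A ∩ B).card := by
      have : Su.card ≤ (A ×ˢ (A ∩ B)).card := by
        apply Finset.card_le_card_of_injOn (fun p => (p.1, p.2.1))
        · rintro ⟨x, y, c⟩ hp
          simp only [Finset.mem_coe, hSu, hS, Finset.mem_filter, Finset.mem_product, Finset.mem_univ, true_and,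
            and_true] at hp
          obtain ⟨⟨⟨hx, hy⟩, hxc, hcy⟩, hcu⟩ := hp
          subst hcu
          simp only [Finset.mem_coe, Finset.mem_product, Finset.mem_inter]
          refine ⟨hx, ?_, hy⟩
          simp only [hA, Finset.mem_filter, Finset.mem_univ, true_and]
          exact hcy
        · rintro ⟨x, y, c⟩ hp ⟨x', y', c'⟩ hp' hh
          simp only [hSu, Finset.mem_coe, Finset.mem_filter] at hp hp'
          simp only [Prod.mk.injEq] at hh
          have : c = c' := by rw [hp.2, hp'.2]
          simp_all [Prod.ext_iff]
      simpa [Finset.card_product] using this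
    have hSvcard : Sv.card ≤ (A ∩ B).card * B.card := by
      have : Sv.card ≤ ((A ∩ B) ×ˢ B).card := by
        apply Finset.card_le_card_of_injOn (fun p => (p.1, p.2.1))
        · rintro ⟨x, y, c⟩ hp
          simp only [Finset.mem_coe, hSv, hS, Finset.mem_filter, Finset.mem_product, Finset.mem_univ, true_and,
            and_true] at hp
          obtain ⟨⟨⟨hx, hy⟩, hxc, hcy⟩, hcv⟩ := hp
          subst hcv
          simp only [Finset.mem_coe, Finset.mem_product, Finset.mem_inter]
          refine ⟨⟨hx, ?_⟩, hy⟩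
          simp only [hB, Finset.mem_filter, Finset.mem_univ, true_and]
          exact hxc
        · rintro ⟨x, y, c⟩ hp ⟨x', y', c'⟩ hp' hh
          simp only [hSv, Finset.mem_coe, Finset.mem_filter] at hp hp'
          simp only [Prod.mk.injEq] at hh
          have : c = c' := by rw [hp.2, hp'.2]
          simp_all [Prod.ext_iff]
      simpa [Finset.card_product] using this
    have hcards : S.card ≤ S3.card + A.card * (A ∩ B).card + (A ∩ B).card * B.card := by
      calc S.card ≤ (S3 ∪ (Su ∪ Sv)).card := Finset.card_le_card hcov
        _ ≤ S3.card + (Su ∪ Sv).card := Finset.card_union_le _ _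
        _ ≤ S3.card + (Su.card + Sv.card) := by
            have := Finset.card_union_le Su Sv
            omega
        _ ≤ _ := by omega
    have hc1 : (S.card : ℝ) ≤ (S3.card : ℝ) + a * i + i * b := by
      rw [ha, hi, hb]
      exact_mod_cast hcards
    have hc2 : (S3.card : ℝ) ≤ (pathCount E u v 3 : ℝ) := by exact_mod_cast hS3path
    rw [hT]
    nlinarith [hia, hib, hi0, han, hbn]
  -- total edge count
  set Edges : Finset (V × V) := ((univ : Finset V) ×ˢ (univ : Finset V)).filter
    fun p => E p.1 p.2 with hEdges
  have hEd1 : ∑ x ∈ (univ : Finset V), degPlus E x = Edges.card :=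
    (aux_card_pair univ univ E).symm
  have hEd2 : ∑ y ∈ (univ : Finset V), degMinus E y = Edges.card :=
    (aux_card_pair' univ univ E).symm
  have hEdr : (Edges.card : ℝ) ≤ nr * (nr - 1) / 2 := by
    have h := aux_orient_bound E hor (univ : Finset V)
    rw [Finset.card_univ, ← hn] at h
    have : (2 * Edges.card + n : ℝ) ≤ (n * n : ℕ) := by exact_mod_cast Nat.cast_le.2 h
    push_cast at this
    rw [hnr]
    linarith
  -- quadratic degree bounds
  have Hv : (nr - 1 - b) * (m - b) ≤ nr * (nr - 1) / 2 := by
    set D : Finset V := univ \ insert v B with hD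
    have hcard1 : (insert v B).card = B.card + 1 := Finset.card_insert_of_notMem hvB
    have hcard2 : (insert v B).card ≤ n := by
      rw [hn, ← Finset.card_univ]; exact Finset.card_le_card (Finset.subset_univ _)
    have hDcard : (D.card : ℝ) = nr - 1 - b := by
      rw [hD, Finset.card_sdiff_of_subset (Finset.subset_univ _), Finset.card_univ, ← hn, hcard1]
      rw [hnr, hb]
      have : B.card + 1 ≤ n := by rw [← hcard1]; exact hcard2
      push_cast [Nat.cast_sub this]
      ring
    have hper : ∀ x ∈ D, m - b ≤ (degPlus E x : ℝ) := by
      intro x hx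
      rw [hD, Finset.mem_sdiff, Finset.mem_insert] at hx
      push_neg at hx
      obtain ⟨-, hxv, hxB⟩ := hx
      have hnE : ¬ E x v := by
        intro h; exact hxB (by simp [hB, h])
      have := hOre x v hxv hnE
      rw [hdegv] at this
      linarith
    have hsum : (D.card : ℝ) * (m - b) ≤ ∑ x ∈ D, (degPlus E x : ℝ) := by
      have := Finset.card_nsmul_le_sum D (fun x => (degPlus E x : ℝ)) (m - b) hper
      rwa [nsmul_eq_mul] at this
    have hsum2 : ∑ x ∈ D, (degPlus E x : ℝ) ≤ (Edges.card : ℝ) := by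
      rw [← hEd1]
      push_cast
      apply Finset.sum_le_sum_of_subset_of_nonneg (Finset.subset_univ _)
      intro x _ _
      positivity
    rw [← hDcard]
    linarith
  have Hu : (nr - 1 - a) * (m - a) ≤ nr * (nr - 1) / 2 := by
    set D : Finset V := univ \ insert u A with hD
    have hcard1 : (insert u A).card = A.card + 1 := Finset.card_insert_of_notMem huA
    have hcard2 : (insert u A).card ≤ n := by
      rw [hn, ← Finset.card_univ]; exact Finset.card_le_card (Finset.subset_univ _)
    have hDcard : (D.card : ℝ) = nr - 1 - a := by
      rw [hD, Finset.card_sdiff_of_subset (Finset.subset_univ _), Finset.card_univ, ← hn, hcard1]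
      rw [hnr, ha]
      have : A.card + 1 ≤ n := by rw [← hcard1]; exact hcard2
      push_cast [Nat.cast_sub this]
      ring
    have hper : ∀ y ∈ D, m - a ≤ (degMinus E y : ℝ) := by
      intro y hy
      rw [hD, Finset.mem_sdiff, Finset.mem_insert] at hy
      push_neg at hy
      obtain ⟨-, hyu, hyA⟩ := hy
      have hnE : ¬ E u y := by
        intro h; exact hyA (by simp [hA, h])
      have := hOre u y (fun h => hyu h.symm) hnE
      rw [hdegu] at this
      linarith
    have hsum : (D.card : ℝ) * (m - a) ≤ ∑ y ∈ D, (degMinus E y : ℝ) := by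
      have := Finset.card_nsmul_le_sum D (fun y => (degMinus E y : ℝ)) (m - a) hper
      rwa [nsmul_eq_mul] at this
    have hsum2 : ∑ y ∈ D, (degMinus E y : ℝ) ≤ (Edges.card : ℝ) := by
      rw [← hEd2]
      push_cast
      apply Finset.sum_le_sum_of_subset_of_nonneg (Finset.subset_univ _)
      intro x _ _
      positivity
    rw [← hDcard]
    linarith
  -- the master inequality
  set g : V × V → ℕ := fun q => ((univ : Finset V).filter fun c => E q.1 c ∧ E c q.2).card
    with hg
  set P : Finset (V × V) := A' ×ˢ B' with hP
  set P2 : Finset (V × V) := P.filter fun q => E q.1 q.2 with hP2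
  set P1 : Finset (V × V) := P.filter fun q => ¬ E q.1 q.2 with hP1
  have hPsub : P ⊆ A ×ˢ B := by
    rw [hP, hA', hB']
    exact Finset.product_subset_product (Finset.sdiff_subset) (Finset.sdiff_subset)
  have hstep1 : ∑ q ∈ P1, g q ≤ S.card := by
    rw [hTsum]
    exact Finset.sum_le_sum_of_subset ((Finset.filter_subset _ _).trans hPsub)
  -- real-valued neighbourhood counts
  set fαA : V → ℝ := fun x => ((A.filter fun z => E x z).card : ℝ) with hfαA
  set fαB : V → ℝ := fun x => ((B.filter fun z => E x z).card : ℝ) with hfαB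
  set fβA : V → ℝ := fun y => ((A.filter fun x => E x y).card : ℝ) with hfβA
  set fβB : V → ℝ := fun y => ((B.filter fun x => E x y).card : ℝ) with hfβB
  have hper : ∀ q ∈ P1, m - c0 - (fαA q.1 + fαB q.1 + fβA q.2 + fβB q.2) ≤ (g q : ℝ) := by
    rintro ⟨x, y⟩ hq
    rw [hP1, Finset.mem_filter, hP, Finset.mem_product] at hq
    obtain ⟨⟨hxA', hyB'⟩, hnExy⟩ := hq
    rw [hA', Finset.mem_sdiff] at hxA'
    rw [hB', Finset.mem_sdiff] at hyB'
    have hxy : x ≠ y := by rintro rfl; exact hyB'.2 hxA'.1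
    have hOxy := hOre x y hxy hnExy
    set Np : Finset V := univ.filter fun z => E x z with hNp
    set Nm : Finset V := univ.filter fun z => E z y with hNm
    have hdegx : degPlus E x = Np.card := rfl
    have hdegy : degMinus E y = Nm.card := rfl
    have hgq : g (x, y) = (Np ∩ Nm).card := by
      rw [hg]
      simp only
      rw [Finset.filter_and]
    set X : Finset V := Np ∩ Cs with hX
    set Y : Finset V := Nm ∩ Cs with hY
    have hXYsub : X ∩ Y ⊆ Np ∩ Nm := by
      intro z hz
      simp only [hX, hY, Finset.mem_inter] at hz ⊢
      exact ⟨hz.1.1, hz.2.1⟩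
    have hcXY : X.card + Y.card ≤ Cs.card + (X ∩ Y).card := by
      have h1 : (X ∪ Y).card + (X ∩ Y).card = X.card + Y.card :=
        Finset.card_union_add_card_inter X Y
      have h2 : (X ∪ Y).card ≤ Cs.card :=
        Finset.card_le_card (Finset.union_subset Finset.inter_subset_right
          Finset.inter_subset_right)
      omega
    have hcoverN : ∀ (N : Finset V), N.card ≤ (N ∩ A).card + (N ∩ B).card + (N ∩ Cs).card := by
      intro N
      have hsub : N ⊆ (N ∩ A) ∪ (N ∩ B) ∪ (N ∩ Cs) := by
        intro z hz
        simp only [Finset.mem_union, Finset.mem_inter, hCs, Finset.mem_sdiff, Finset.mem_univ,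
          Finset.mem_union, true_and]
        by_cases h1 : z ∈ A
        · exact Or.inl (Or.inl ⟨hz, h1⟩)
        by_cases h2 : z ∈ B
        · exact Or.inl (Or.inr ⟨hz, h2⟩)
        · exact Or.inr ⟨hz, fun h => by rcases h with h | h <;> tauto⟩
      calc N.card ≤ ((N ∩ A) ∪ (N ∩ B) ∪ (N ∩ Cs)).card := Finset.card_le_card hsub
        _ ≤ ((N ∩ A) ∪ (N ∩ B)).card + (N ∩ Cs).card := Finset.card_union_le _ _
        _ ≤ (N ∩ A).card + (N ∩ B).card + (N ∩ Cs).card := by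
            have := Finset.card_union_le (N ∩ A) (N ∩ B)
            omega
    have hNpA : Np ∩ A = A.filter fun z => E x z := aux_filter_inter _ A univ (Finset.subset_univ A)
    have hNpB : Np ∩ B = B.filter fun z => E x z := aux_filter_inter _ B univ (Finset.subset_univ B)
    have hNmA : Nm ∩ A = A.filter fun z => E z y := aux_filter_inter _ A univ (Finset.subset_univ A)
    have hNmB : Nm ∩ B = B.filter fun z => E z y := aux_filter_inter _ B univ (Finset.subset_univ B)
    have hcovNp := hcoverN Np
    have hcovNm := hcoverN Nm
    rw [hNpA, hNpB] at hcovNp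
    rw [hNmA, hNmB] at hcovNm
    -- cast everything
    have c1 : ((Np ∩ Nm).card : ℝ) ≥ ((X ∩ Y).card : ℝ) :=
      Nat.cast_le.2 (Finset.card_le_card hXYsub)
    have c2 : ((X).card : ℝ) + (Y.card : ℝ) ≤ c0 + ((X ∩ Y).card : ℝ) := by
      rw [hc0]; exact_mod_cast hcXY
    have c3 : ((Np.card : ℝ)) ≤ fαA x + fαB x + (X.card : ℝ) := by
      simp only [hfαA, hfαB, hX]; exact_mod_cast hcovNp
    have c4 : ((Nm.card : ℝ)) ≤ fβA y + fβB y + (Y.card : ℝ) := by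
      simp only [hfβA, hfβB, hY]; exact_mod_cast hcovNm
    have c5 : (Np.card : ℝ) + (Nm.card : ℝ) ≥ m := by
      rw [hdegx, hdegy] at hOxy; exact_mod_cast hOxy
    rw [hgq]
    push_cast
    simp only [hfαA, hfαB, hfβA, hfβB] at *
    linarith
  -- summation of the per-pair bound
  have hsum1 : ∑ q ∈ P1, (m - c0 - (fαA q.1 + fαB q.1 + fβA q.2 + fβB q.2)) ≤ T := by
    have h1 : ∑ q ∈ P1, (m - c0 - (fαA q.1 + fαB q.1 + fβA q.2 + fβB q.2))
        ≤ ∑ q ∈ P1, (g q : ℝ) := Finset.sum_le_sum hper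
    have h2 : ∑ q ∈ P1, (g q : ℝ) = ((∑ q ∈ P1, g q : ℕ) : ℝ) := by push_cast; rfl
    have h3 : ((∑ q ∈ P1, g q : ℕ) : ℝ) ≤ T := by
      rw [hT]; exact_mod_cast hstep1
    linarith
  have hexpand : ∑ q ∈ P1, (m - c0 - (fαA q.1 + fαB q.1 + fβA q.2 + fβB q.2))
      = (P1.card : ℝ) * (m - c0)
        - (∑ q ∈ P1, fαA q.1 + ∑ q ∈ P1, fαB q.1 + ∑ q ∈ P1, fβA q.2 + ∑ q ∈ P1, fβB q.2) := by
    rw [Finset.sum_sub_distrib, Finset.sum_const, nsmul_eq_mul]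
    congr 1
    rw [← Finset.sum_add_distrib, ← Finset.sum_add_distrib, ← Finset.sum_add_distrib]
  -- bounds on the four sums
  have hwithinA : ∑ x ∈ A, fαA x ≤ a * (a - 1) / 2 := by
    have h1 : ∑ x ∈ A, (A.filter fun z => E x z).card
        = ((A ×ˢ A).filter fun p => E p.1 p.2).card := (aux_card_pair A A E).symm
    have h2 := aux_orient_bound E hor A
    have h3 : (2 * (((A ×ˢ A).filter fun p => E p.1 p.2).card : ℝ) + a) ≤ a * a := by
      rw [ha]; exact_mod_cast h2
    have h4 : ∑ x ∈ A, fαA x = ((∑ x ∈ A, (A.filter fun z => E x z).card : ℕ) : ℝ) := by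
      rw [hfαA]; push_cast; rfl
    rw [h4, h1]
    linarith
  have hwithinB : ∑ y ∈ B, fβB y ≤ b * (b - 1) / 2 := by
    have h1 : ∑ y ∈ B, (B.filter fun x => E x y).card
        = ((B ×ˢ B).filter fun p => E p.1 p.2).card := (aux_card_pair' B B E).symm
    have h2 := aux_orient_bound E hor B
    have h3 : (2 * (((B ×ˢ B).filter fun p => E p.1 p.2).card : ℝ) + b) ≤ b * b := by
      rw [hb]; exact_mod_cast h2
    have h4 : ∑ y ∈ B, fβB y = ((∑ y ∈ B, (B.filter fun x => E x y).card : ℕ) : ℝ) := by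
      rw [hfβB]; push_cast; rfl
    rw [h4, h1]
    linarith
  have hcrossA : ∑ x ∈ A, fαB x = e := by
    have h1 : ∑ x ∈ A, (B.filter fun z => E x z).card = eSet.card := by
      rw [heSet]; exact (aux_card_pair A B E).symm
    have h4 : ∑ x ∈ A, fαB x = ((∑ x ∈ A, (B.filter fun z => E x z).card : ℕ) : ℝ) := by
      rw [hfαB]; push_cast; rfl
    rw [h4, h1, he]
  have hcrossB : ∑ y ∈ B, fβA y = e := by
    have h1 : ∑ y ∈ B, (A.filter fun x => E x y).card = eSet.card := by
      rw [heSet]; exact (aux_card_pair' A B E).symm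
    have h4 : ∑ y ∈ B, fβA y = ((∑ y ∈ B, (A.filter fun x => E x y).card : ℕ) : ℝ) := by
      rw [hfβA]; push_cast; rfl
    rw [h4, h1, he]
  -- nonnegativity of the f functions
  have hfnonneg : ∀ (f : V → ℝ), (∀ z, 0 ≤ f z) → True := fun _ _ => trivial
  have hfαA0 : ∀ z, 0 ≤ fαA z := fun z => by rw [hfαA]; positivity
  have hfαB0 : ∀ z, 0 ≤ fαB z := fun z => by rw [hfαB]; positivity
  have hfβA0 : ∀ z, 0 ≤ fβA z := fun z => by rw [hfβA]; positivity
  have hfβB0 : ∀ z, 0 ≤ fβB z := fun z => by rw [hfβB]; positivity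
  -- sums over P1 of functions of the first coordinate
  have hfirst : ∀ (f : V → ℝ), (∀ z, 0 ≤ f z) →
      ∑ q ∈ P1, f q.1 ≤ b1 * ∑ x ∈ A', f x := by
    intro f hf
    have h1 : ∑ q ∈ P1, f q.1 ≤ ∑ q ∈ P, f q.1 :=
      Finset.sum_le_sum_of_subset_of_nonneg (Finset.filter_subset _ _)
        (fun q _ _ => hf q.1)
    have h2 : ∑ q ∈ P, f q.1 = b1 * ∑ x ∈ A', f x := by
      rw [hP, Finset.sum_product]
      simp only
      simp only [Finset.sum_const, nsmul_eq_mul, ← Finset.mul_sum, hb1]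
    linarith
  have hsecond : ∀ (f : V → ℝ), (∀ z, 0 ≤ f z) →
      ∑ q ∈ P1, f q.2 ≤ a1 * ∑ y ∈ B', f y := by
    intro f hf
    have h1 : ∑ q ∈ P1, f q.2 ≤ ∑ q ∈ P, f q.2 :=
      Finset.sum_le_sum_of_subset_of_nonneg (Finset.filter_subset _ _)
        (fun q _ _ => hf q.2)
    have h2 : ∑ q ∈ P, f q.2 = a1 * ∑ y ∈ B', f y := by
      rw [hP, Finset.sum_product]
      simp only
      simp only [Finset.sum_const, nsmul_eq_mul, ha1]
    linarith
  have hsubA' : ∀ (f : V → ℝ), (∀ z, 0 ≤ f z) → ∑ x ∈ A', f x ≤ ∑ x ∈ A, f x := by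
    intro f hf
    exact Finset.sum_le_sum_of_subset_of_nonneg (by rw [hA']; exact Finset.sdiff_subset)
      (fun x _ _ => hf x)
  have hsubB' : ∀ (f : V → ℝ), (∀ z, 0 ≤ f z) → ∑ y ∈ B', f y ≤ ∑ y ∈ B, f y := by
    intro f hf
    exact Finset.sum_le_sum_of_subset_of_nonneg (by rw [hB']; exact Finset.sdiff_subset)
      (fun y _ _ => hf y)
  have ha10 : 0 ≤ a1 := by rw [ha1]; positivity
  have hb10 : 0 ≤ b1 := by rw [hb1]; positivity
  have hS1 : ∑ q ∈ P1, fαA q.1 ≤ b1 * (a * (a - 1) / 2) :=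
    le_trans (hfirst fαA hfαA0) (mul_le_mul_of_nonneg_left
      (le_trans (hsubA' fαA hfαA0) hwithinA) hb10)
  have hS2 : ∑ q ∈ P1, fαB q.1 ≤ b1 * e :=
    le_trans (hfirst fαB hfαB0) (mul_le_mul_of_nonneg_left
      (le_trans (hsubA' fαB hfαB0) hcrossA.le) hb10)
  have hS3' : ∑ q ∈ P1, fβB q.2 ≤ a1 * (b * (b - 1) / 2) :=
    le_trans (hsecond fβB hfβB0) (mul_le_mul_of_nonneg_left
      (le_trans (hsubB' fβB hfβB0) hwithinB) ha10)
  have hS4 : ∑ q ∈ P1, fβA q.2 ≤ a1 * e :=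
    le_trans (hsecond fβA hfβA0) (mul_le_mul_of_nonneg_left
      (le_trans (hsubB' fβA hfβA0) hcrossB.le) ha10)
  -- cardinality of P1
  have hP1P2 : P2.card + P1.card = P.card := by
    rw [hP2, hP1]
    exact Finset.card_filter_add_card_filter_not _
  have hP2e : P2.card ≤ eSet.card := by
    apply Finset.card_le_card
    rw [hP2, heSet]
    exact Finset.filter_subset_filter _ hPsub
  have hPcard : P.card = A'.card * B'.card := by rw [hP]; exact Finset.card_product _ _
  have hm0 : 0 ≤ m := by rw [hm]; linarith
  have hc00 : 0 ≤ c0 := by rw [hc0]; positivity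
  have hP1ge : (P1.card : ℝ) ≥ a1 * b1 - e := by
    have h : A'.card * B'.card ≤ P1.card + eSet.card := by
      rw [← hPcard, ← hP1P2]
      exact Nat.add_le_add_right hP2e P1.card |>.trans_eq (Nat.add_comm _ _) |>.trans_eq rfl
    have h2 : ((A'.card * B'.card : ℕ) : ℝ) ≤ ((P1.card + eSet.card : ℕ) : ℝ) := Nat.cast_le.2 h
    push_cast at h2
    rw [ha1, hb1, he]
    linarith
  have hP1le : (P1.card : ℝ) ≤ a1 * b1 := by
    have h : P1.card ≤ A'.card * B'.card := by
      rw [← hPcard, ← hP1P2]; exact Nat.le_add_left _ _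
    rw [ha1, hb1]
    exact_mod_cast h
  have hP1term : (P1.card : ℝ) * (m - c0) ≥ a1 * b1 * (m - c0) - e * m :=
    aux_P1term _ _ _ _ _ _ hP1ge hP1le he0 hm0 hc00
  -- the master inequality
  have master : T ≥ a1 * b1 * (m - c0) - e * m
      - b1 * (a * (a - 1) / 2 + e) - a1 * (b * (b - 1) / 2 + e) := by
    have hh := hsum1
    rw [hexpand] at hh
    linarith [hS1, hS2, hS3', hS4, hP1term, hh]
  -- a, b at most nr - 2
  have hsubuv : ∀ (X : Finset V), u ∉ X → v ∉ X → (X.card : ℝ) ≤ nr - 2 := by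
    intro X hu hv
    have hsub : X ⊆ univ \ {u, v} := by
      intro z hz
      simp only [Finset.mem_sdiff, Finset.mem_univ, Finset.mem_insert, Finset.mem_singleton,
        true_and]
      push_neg
      constructor
      · rintro rfl; exact hu hz
      · rintro rfl; exact hv hz
    have hc : (univ \ ({u, v} : Finset V)).card = n - 2 := by
      rw [Finset.card_sdiff_of_subset (Finset.subset_univ _), Finset.card_univ, ← hn]
      congr 1
      rw [Finset.card_insert_of_notMem (by simp [huv]), Finset.card_singleton]
    have := Finset.card_le_card hsub
    rw [hc] at this
    have h2 : ((n - 2 : ℕ) : ℝ) = nr - 2 := by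
      rw [hnr]; push_cast [Nat.cast_sub hn2]; ring
    calc (X.card : ℝ) ≤ ((n - 2 : ℕ) : ℝ) := Nat.cast_le.2 this
      _ = nr - 2 := h2
  have ha2n : a ≤ nr - 2 := by rw [ha]; exact hsubuv A huA hvA
  have hb2n : b ≤ nr - 2 := by rw [hb]; exact hsubuv B huB hvB
  have haN : a = 0 ∨ 1 ≤ a := by
    rcases Nat.eq_zero_or_pos A.card with h | h
    · left; rw [ha, h]; norm_num
    · right; rw [ha]; exact_mod_cast h
  have hbN : b = 0 ∨ 1 ≤ b := by
    rcases Nat.eq_zero_or_pos B.card with h | h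
    · left; rw [hb, h]; norm_num
    · right; rw [hb]; exact_mod_cast h
  rw [ha1e, hb1e, hc0e] at master
  have heps : ((2:ℝ))^(-24:ℤ) = 1/16777216 := by norm_num
  rcases le_or_gt (257:ℝ) nr with hbig | hsmall
  · -- large n
    by_cases hc1 : (1/16777216 : ℝ) * nr ≤ i
    · refine ⟨1, le_refl 1, by norm_num, ?_⟩
      rw [heps, pow_one]
      linarith [hpc1]
    by_cases hc2 : (1/16777216 : ℝ) * nr^2 ≤ e
    · refine ⟨2, by norm_num, by norm_num, ?_⟩
      rw [heps]
      linarith [hpc2]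
    · push_neg at hc1 hc2
      refine ⟨3, by norm_num, le_refl 3, ?_⟩
      rw [heps]
      have hc2' : e ≤ nr*nr/16777216 := by
        have h := hc2
        rw [pow_two] at h
        linarith
      have hlarge := aux_large nr m a b i e T ((pathCount E u v 3 : ℕ) : ℝ)
        hm hbig hab han hbn hi0 hia hib he0 Hu Hv master
        (by linarith) hc2' hpc3
      have hcube : nr^3/16777216 = 1/16777216 * nr^3 := by ring
      rw [hcube] at hlarge
      exact hlarge
  · -- small n
    have hn256 : nr ≤ 256 := by
      rw [hnr]
      have : n < 257 := by exact_mod_cast (by rw [hnr] at hsmall; exact_mod_cast hsmall : (n:ℝ) < 257)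
      exact_mod_cast Nat.le_of_lt_succ this
    by_cases hp1 : 1 ≤ pathCount E u v 1
    · refine ⟨1, le_refl 1, by norm_num, ?_⟩
      rw [heps, pow_one]
      have h1 : (1:ℝ) ≤ (pathCount E u v 1 : ℝ) := by exact_mod_cast hp1
      linarith [hn256, hnr2, h1]
    by_cases hp2 : 1 ≤ pathCount E u v 2
    · refine ⟨2, by norm_num, by norm_num, ?_⟩
      rw [heps]
      have h1 : (1:ℝ) ≤ (pathCount E u v 2 : ℝ) := by exact_mod_cast hp2
      have hnr0 : (0:ℝ) ≤ nr := by linarith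
      have hsq : nr^2 ≤ 256^2 := pow_le_pow_left₀ hnr0 hn256 2
      have h2 : (256:ℝ)^2 = 65536 := by norm_num
      rw [h2] at hsq
      linarith [h1, hsq]
    by_cases hp3 : 1 ≤ pathCount E u v 3
    · refine ⟨3, by norm_num, le_refl 3, ?_⟩
      rw [heps]
      have h1 : (1:ℝ) ≤ (pathCount E u v 3 : ℝ) := by exact_mod_cast hp3
      have hnr0 : (0:ℝ) ≤ nr := by linarith
      have hcb : nr^3 ≤ 256^3 := pow_le_pow_left₀ hnr0 hn256 3
      have h2 : (256:ℝ)^3 = 16777216 := by norm_num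
      rw [h2] at hcb
      linarith [h1, hcb]
    · exfalso
      have hz1 : pathCount E u v 1 = 0 := by omega
      have hz2 : pathCount E u v 2 = 0 := by omega
      have hz3 : pathCount E u v 3 = 0 := by omega
      have hieq : i = 0 := by
        have := hpc1; rw [hz1] at this
        simp only [Nat.cast_zero] at this
        linarith
      have heeq : e = 0 := by
        have := hpc2; rw [hz2] at this
        simp only [Nat.cast_zero] at this
        linarith
      have hTle : T ≤ 0 := by
        have h := hpc3; rw [hz3] at h
        simp only [Nat.cast_zero] at h
        rw [hieq] at h
        linarith [h]
      have master0 : T ≥ a*b*(m - (nr - (a+b))) - b*(a*(a-1)/2) - a*(b*(b-1)/2) := by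
        rw [hieq, heeq] at master
        linarith [master]
      exact aux_small nr m a b T hm hnr2 hab ha2n hb2n Hu Hv haN hbN master0 hTle
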